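/- Let f : ℝ^d → ℝ be convex and (L₀,L₁)-smooth with minimizer x* (so ∇f(x*) = 0). Then for any x: ‖∇f(x)‖² ≤ (2L₀ + 3L₁‖∇f(x)‖)(f(x) - f(x*)). -/

import Mathlib

set_option maxHeartbeats 1000000

open Real Set InnerProductSpace
open scoped RealInnerProductSpace

private lemma aux_gb_le (δ K ε t : ℝ) (hδ : 0 ≤ δ) (hε : 0 ≤ ε) (hK0 : 0 ≤ K) (hK1 : K < 1)
    (ht0 : 0 ≤ t) (ht1 : t ≤ 1) :
    gronwallBound δ K ε t ≤ δ + (δ * K + ε) * t / (1 - K) := by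
  have h1K : 0 < 1 - K := by linarith
  by_cases hK : K = 0
  · subst hK
    simp only [gronwallBound_K0]
    rw [sub_zero, div_one]
    nlinarith
  · have hKpos : 0 < K := lt_of_le_of_ne hK0 (Ne.symm hK)
    rw [gronwallBound_of_K_ne_0 hK]
    have hexpK : exp K ≤ 1 / (1 - K) := by
      rw [le_div_iff₀ h1K]
      have h := add_one_le_exp (-K)
      have hpos : (0:ℝ) < exp (-K) := exp_pos _
      have : exp K * exp (-K) = 1 := by rw [← exp_add]; simp
      nlinarith
    have hKt : K * t ≤ K := by nlinarith
    have hexp1 : exp (K * t) - 1 ≤ K * t * exp (K * t) := by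
      have h := add_one_le_exp (-(K * t))
      have : exp (K * t) * exp (-(K * t)) = 1 := by rw [← exp_add]; simp
      nlinarith [exp_pos (K * t)]
    have hmono : exp (K * t) ≤ exp K := exp_le_exp.mpr hKt
    have hub : exp (K * t) - 1 ≤ K * t / (1 - K) := by
      have h2 : K * t * exp (K * t) ≤ K * t * (1 / (1 - K)) := by
        apply mul_le_mul_of_nonneg_left (hmono.trans hexpK) (by positivity)
      calc exp (K * t) - 1 ≤ K * t * exp (K * t) := hexp1
        _ ≤ K * t * (1 / (1 - K)) := h2
        _ = K * t / (1 - K) := by ring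
    have hexpub : exp (K * t) ≤ 1 + K * t / (1 - K) := by linarith
    calc δ * exp (K * t) + ε / K * (exp (K * t) - 1)
        ≤ δ * (1 + K * t / (1 - K)) + ε / K * (K * t / (1 - K)) := by gcongr
      _ = δ + (δ * K + ε) * t / (1 - K) := by field_simp; ring

private lemma aux_key_ineq (L0 L1 G S η K ε W : ℝ) (hL0 : 0 < L0) (hL1 : 0 ≤ L1) (hG : 0 < G)
    (hSdef : S = L0 + L1 * G) (hηdef : η = (2 * L0 + L1 * G) / (2 * S ^ 2))
    (hKdef : K = η * G * L1) (hεdef : ε = η * G * L0)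
    (hWdef : W = (G * K + ε) / (1 - K)) :
    G ^ 2 ≤ (2 * L0 + 3 * L1 * G) *
      (η * G ^ 2 - η * G * ((ε + K * G) / 2 + K * W / 6)) := by
  subst hWdef hKdef hεdef hηdef hSdef
  have hS : 0 < L0 + L1 * G := by positivity
  have hKnum : (2 * L0 + L1 * G) / (2 * (L0 + L1 * G) ^ 2) * G * L1
      = (2 * L0 + L1 * G) * (L1 * G) / (2 * (L0 + L1 * G) ^ 2) := by ring
  have h1K : 1 - (2 * L0 + L1 * G) / (2 * (L0 + L1 * G) ^ 2) * G * L1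
      = (2 * L0 ^ 2 + 2 * L0 * (L1 * G) + (L1 * G) ^ 2) / (2 * (L0 + L1 * G) ^ 2) := by
    rw [hKnum]
    field_simp
    ring
  rw [h1K]
  have hden : (0:ℝ) < 2 * L0 ^ 2 + 2 * L0 * (L1 * G) + (L1 * G) ^ 2 := by positivity
  field_simp
  have hcert : (0:ℝ) ≤ (L0 + L1 * G) * L0 *
      (L1 * G * (4 * L0 ^ 3 + 6 * L0 ^ 2 * (L1 * G) + 3 * L0 * (L1 * G) ^ 2 + 2 * (L1 * G) ^ 3)) := by
    apply mul_nonneg (by positivity)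
    exact mul_nonneg (mul_nonneg hL1 hG.le) (by positivity)
  linarith [hcert]

/-- For convex (L₀,L₁)-smooth f with minimizer x*:
    ‖∇f(x)‖² ≤ (2L₀ + 3L₁‖∇f(x)‖)(f(x) - f(x*)). -/
theorem stmt_10 (d : ℕ) (L0 L1 : ℝ) (hL0 : 0 < L0) (hL1 : 0 ≤ L1)
    (f : EuclideanSpace ℝ (Fin d) → ℝ) (hf : ContDiff ℝ 2 f)
    (hconv : ConvexOn ℝ Set.univ f)
    (hsmooth : ∀ x : EuclideanSpace ℝ (Fin d),
      ‖fderiv ℝ (gradient f) x‖ ≤ L0 + L1 * ‖gradient f x‖)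
    (xs : EuclideanSpace ℝ (Fin d)) (hxs : ∀ y, f xs ≤ f y) :
    ∀ x : EuclideanSpace ℝ (Fin d),
      ‖gradient f x‖ ^ 2 ≤ (2 * L0 + 3 * L1 * ‖gradient f x‖) * (f x - f xs) := by
  intro x
  -- gradient is differentiable (f is C²)
  have hdiffgrad : Differentiable ℝ (gradient f) := by
    have hd : ContDiff ℝ 1 (fderiv ℝ f) := hf.fderiv_right (by norm_num)
    exact (toDual ℝ (EuclideanSpace ℝ (Fin d))).symm.differentiable.comp
      (hd.differentiable one_ne_zero)
  set g : EuclideanSpace ℝ (Fin d) := gradient f x with hgdef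
  set G : ℝ := ‖g‖ with hGdef
  rcases eq_or_lt_of_le (norm_nonneg g) with hG0 | hG
  · -- zero-gradient case
    have hGz : G = 0 := hG0.symm
    rw [hGz]
    have h1 := hxs x
    nlinarith
  -- main case : 0 < G
  set S : ℝ := L0 + L1 * G with hSdef
  set η : ℝ := (2 * L0 + L1 * G) / (2 * S ^ 2) with hηdef
  set K : ℝ := η * G * L1 with hKdef
  set ε : ℝ := η * G * L0 with hεdef
  set W : ℝ := (G * K + ε) / (1 - K) with hWdef
  have hS : 0 < S := by positivity
  have hη : 0 < η := by positivity
  have hK0 : 0 ≤ K := by positivity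
  have hε0 : 0 ≤ ε := by positivity
  have hK1 : K < 1 := by
    have h1K : 1 - K = (2 * L0 ^ 2 + 2 * L0 * (L1 * G) + (L1 * G) ^ 2) / (2 * S ^ 2) := by
      rw [hKdef, hηdef, hSdef]
      have hS2 : L0 + L1 * G ≠ 0 := by positivity
      field_simp
      ring
    nlinarith [div_pos (by positivity :
        (0:ℝ) < 2 * L0 ^ 2 + 2 * L0 * (L1 * G) + (L1 * G) ^ 2)
      (by positivity : (0:ℝ) < 2 * S ^ 2), h1K]
  have h1K : 0 < 1 - K := by linarith
  have hW0 : 0 ≤ W := by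
    rw [hWdef]
    positivity
  set v : EuclideanSpace ℝ (Fin d) := (-η) • g with hvdef
  have hnormv : ‖v‖ = η * G := by
    rw [hvdef, norm_smul]
    simp [abs_of_pos hη, hGdef]
  set γ : ℝ → EuclideanSpace ℝ (Fin d) := fun t => x + t • v with hγdef
  have hγ0 : γ 0 = x := by simp [hγdef]
  have hγcont : Continuous γ := by
    apply continuous_const.add (continuous_id.smul continuous_const)
  set F : ℝ → EuclideanSpace ℝ (Fin d) := fun t => gradient f (γ t) with hFdef
  have hF0 : F 0 = g := by rw [hFdef]; simp only [hγ0, hgdef]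
  have hFcont : Continuous F := hdiffgrad.continuous.comp hγcont
  have hγder : ∀ t : ℝ, HasDerivAt γ v t := by
    intro t
    have h := ((hasDerivAt_id' t).smul_const v).const_add x
    rw [one_smul] at h
    exact h
  have hF' : ∀ t : ℝ, HasDerivAt F ((fderiv ℝ (gradient f) (γ t)) v) t := by
    intro t
    exact (hdiffgrad (γ t)).hasFDerivAt.comp_hasDerivAt t (hγder t)
  have hF'bound : ∀ t : ℝ, ‖(fderiv ℝ (gradient f) (γ t)) v‖ ≤ K * ‖F t‖ + ε := by
    intro t
    calc ‖(fderiv ℝ (gradient f) (γ t)) v‖ ≤ ‖fderiv ℝ (gradient f) (γ t)‖ * ‖v‖ :=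
          (fderiv ℝ (gradient f) (γ t)).le_opNorm v
      _ ≤ (L0 + L1 * ‖gradient f (γ t)‖) * ‖v‖ :=
          mul_le_mul_of_nonneg_right (hsmooth (γ t)) (norm_nonneg v)
      _ = K * ‖F t‖ + ε := by rw [hnormv, hFdef, hKdef, hεdef]; ring
  -- Grönwall bound on ‖F t‖
  have hgron : ∀ t ∈ Icc (0:ℝ) 1, ‖F t‖ ≤ gronwallBound G K ε (t - 0) := by
    apply norm_le_gronwallBound_of_norm_deriv_right_le
      (f' := fun t => (fderiv ℝ (gradient f) (γ t)) v) hFcont.continuousOn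
    · exact fun t _ => (hF' t).hasDerivWithinAt
    · rw [hF0]
    · exact fun t _ => hF'bound t
  have hFle : ∀ t ∈ Icc (0:ℝ) 1, ‖F t‖ ≤ G + W * t := by
    intro t ht
    have h1 := hgron t ht
    rw [sub_zero] at h1
    have h2 := aux_gb_le G K ε t (by positivity) hε0 hK0 hK1 ht.1 ht.2
    have h3 : (G * K + ε) * t / (1 - K) = W * t := by
      rw [hWdef]; ring
    linarith
  -- quadratic bound on ‖F t - g‖
  have hsub : ∀ t ∈ Icc (0:ℝ) 1, ‖F t - g‖ ≤ (ε + K * G) * t + K * W * (t ^ 2 / 2) := by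
    have hBder : ∀ s : ℝ,
        HasDerivAt (fun t => (ε + K * G) * t + K * W * (t ^ 2 / 2)) ((ε + K * G) + K * W * s) s := by
      intro s
      have h2 : HasDerivAt (fun t : ℝ => t ^ 2 / 2) s s := by
        simpa using (hasDerivAt_pow 2 s).div_const 2
      exact (((hasDerivAt_id' s).const_mul (ε + K * G)).add (h2.const_mul (K * W))).congr_deriv (by ring)
    apply image_norm_le_of_norm_deriv_right_le_deriv_boundary
      (f' := fun t => (fderiv ℝ (gradient f) (γ t)) v)
      ((hFcont.sub continuous_const).continuousOn)
      (fun t _ => ((hF' t).sub_const g).hasDerivWithinAt) _ hBder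
    · intro t ht
      have h1 := hF'bound t
      have h2 := hFle t (Ico_subset_Icc_self ht)
      nlinarith
    · simp [hF0, hgdef]
  -- derivative of f along the path
  have hφ' : ∀ t : ℝ, HasDerivAt (fun s => f (γ s)) ⟪F t, v⟫ t := by
    intro t
    have h1 := ((hf.differentiable (by norm_num) (γ t)).hasFDerivAt).comp_hasDerivAt t (hγder t)
    have h2 : ⟪F t, v⟫ = (fderiv ℝ f (γ t)) v := by
      show ⟪gradient f (γ t), v⟫_ℝ = (fderiv ℝ f (γ t)) v
      rw [show gradient f (γ t)
          = (toDual ℝ (EuclideanSpace ℝ (Fin d))).symm (fderiv ℝ f (γ t)) from rfl,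
        ← toDual_apply_apply, LinearIsometryEquiv.apply_symm_apply]
    rw [h2]; exact h1
  have hinner : ∀ t ∈ Ico (0:ℝ) 1,
      ⟪F t, v⟫ ≤ -(η * G ^ 2) + η * G * ((ε + K * G) * t + K * W * (t ^ 2 / 2)) := by
    intro t ht
    have h1 : ⟪F t, v⟫ = ⟪g, v⟫ + ⟪F t - g, v⟫ := by
      rw [← inner_add_left]
      congr 1
      abel
    have h2 : ⟪g, v⟫ = -(η * G ^ 2) := by
      rw [hvdef, real_inner_smul_right, real_inner_self_eq_norm_sq, ← hGdef]
      ring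
    have h3 : ⟪F t - g, v⟫ ≤ ‖F t - g‖ * ‖v‖ := real_inner_le_norm _ _
    have h4 := hsub t (Ico_subset_Icc_self ht)
    have h5 : ‖F t - g‖ * ‖v‖ ≤ ((ε + K * G) * t + K * W * (t ^ 2 / 2)) * (η * G) := by
      rw [hnormv]
      apply mul_le_mul_of_nonneg_right h4 (by positivity)
    rw [h1, h2]
    linarith [h3, h5]
  -- fencing: upper bound for f along the path
  have hφle : f (γ 1) ≤ f x + (-(η * G ^ 2)) * 1
      + η * G * ((ε + K * G) * (1 ^ 2 / 2) + K * W * (1 ^ 3 / 6)) := by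
    have hBder : ∀ s : ℝ, HasDerivAt
        (fun t => f x + (-(η * G ^ 2)) * t + η * G * ((ε + K * G) * (t ^ 2 / 2) + K * W * (t ^ 3 / 6)))
        (-(η * G ^ 2) + η * G * ((ε + K * G) * s + K * W * (s ^ 2 / 2))) s := by
      intro s
      have h2 : HasDerivAt (fun t : ℝ => t ^ 2 / 2) s s := by
        simpa using (hasDerivAt_pow 2 s).div_const 2
      have h3 : HasDerivAt (fun t : ℝ => t ^ 3 / 6) (s ^ 2 / 2) s := by
        have h := (hasDerivAt_pow 3 s).div_const 6
        exact h.congr_deriv (by rw [show (3:ℕ) - 1 = 2 from rfl]; push_cast; ring)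
      have h0 : HasDerivAt (fun t : ℝ => -(η * G ^ 2) * t) (-(η * G ^ 2)) s := by
        simpa using (hasDerivAt_id s).const_mul (-(η * G ^ 2))
      have hq : HasDerivAt (fun t : ℝ => (ε + K * G) * (t ^ 2 / 2) + K * W * (t ^ 3 / 6))
          ((ε + K * G) * s + K * W * (s ^ 2 / 2)) s :=
        (h2.const_mul (ε + K * G)).add (h3.const_mul (K * W))
      exact (h0.const_add (f x)).add (hq.const_mul (η * G))
    have := image_le_of_deriv_right_le_deriv_boundary
      (f := fun t => f (γ t)) (f' := fun t => ⟪F t, v⟫)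
      (a := 0) (b := 1)
      (B := fun t => f x + -(η * G ^ 2) * t
        + η * G * ((ε + K * G) * (t ^ 2 / 2) + K * W * (t ^ 3 / 6)))
      (B' := fun s => -(η * G ^ 2) + η * G * ((ε + K * G) * s + K * W * (s ^ 2 / 2)))
      ((hf.continuous.comp hγcont).continuousOn)
      (fun t _ => (hφ' t).hasDerivWithinAt)
      (by show f (γ 0) ≤ f x + -(η * G ^ 2) * 0
            + η * G * ((ε + K * G) * (0 ^ 2 / 2) + K * W * (0 ^ 3 / 6))
          rw [hγ0]; norm_num)
      (fun t _ => (hBder t).continuousAt.continuousWithinAt)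
      (fun t _ => (hBder t).hasDerivWithinAt)
      (fun t ht => hinner t ht)
    exact this (right_mem_Icc.mpr zero_le_one)
  have hR : η * G ^ 2 - η * G * ((ε + K * G) / 2 + K * W / 6) ≤ f x - f xs := by
    have h1 := hxs (γ 1)
    have h2 : (1:ℝ) ^ 2 / 2 = 1 / 2 := by norm_num
    have h3 : (1:ℝ) ^ 3 / 6 = 1 / 6 := by norm_num
    rw [h2, h3] at hφle
    have : f x - f (γ 1) ≥ η * G ^ 2 - η * G * ((ε + K * G) / 2 + K * W / 6) := by
      nlinarith [hφle]
    linarith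
  have hkey := aux_key_ineq L0 L1 G S η K ε W hL0 hL1 hG hSdef hηdef hKdef hεdef hWdef
  have hmul : (0:ℝ) ≤ 2 * L0 + 3 * L1 * G := by positivity
  calc G ^ 2 ≤ (2 * L0 + 3 * L1 * G) *
        (η * G ^ 2 - η * G * ((ε + K * G) / 2 + K * W / 6)) := hkey
    _ ≤ (2 * L0 + 3 * L1 * G) * (f x - f xs) := mul_le_mul_of_nonneg_left hR hmul
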